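/- Assume L = 1 and write f_λ = η_λ − θ. Then there exist C > 0 and Λ > 0 such that for all λ ≥ Λ, sup_{t∈[0,1]} |⟨θ(t), f_λ(t)⟩| ≤ C/λ²; i.e., the projection of f_λ(t) onto the direction θ(t) is of order O(1/λ²), one order smaller than |f_λ(t)| itself. -/

import Mathlib

open Real Set Filter
open scoped Topology

/-- Setting as in the hyperbolic-development theorems, with `L = 1`:
`θ : [0,1] → S^{d-1}` is C¹ with derivative `θ'`, and for each `lam > 0` the pair
`(η lam, ρ lam)` solves the development ODE system.  Writing `f_lam = η lam − θ`:
there exist `C > 0` and `Λ > 0` such that for all `lam ≥ Λ`,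
`sup_{t∈[0,1]} |⟨θ(t), f_lam(t)⟩| ≤ C / lam²`, i.e. the projection of `f_lam` onto
`θ` is of order `O(1/lam²)`. -/
theorem step2_projection_bound
    {d : ℕ} (hd : 0 < d)
    (θ θ' : ℝ → EuclideanSpace ℝ (Fin d))
    (hθ1 : ∀ t ∈ Icc (0 : ℝ) 1, ‖θ t‖ = 1)
    (hθd : ∀ t ∈ Icc (0 : ℝ) 1, HasDerivAt θ (θ' t) t)
    (hθ'c : ContinuousOn θ' (Icc 0 1))
    (η : ℝ → ℝ → EuclideanSpace ℝ (Fin d)) (ρ : ℝ → ℝ → ℝ)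
    (hηc : ∀ lam > (0 : ℝ), ContinuousOn (η lam) (Icc 0 1))
    (hρc : ∀ lam > (0 : ℝ), ContinuousOn (ρ lam) (Icc 0 1))
    (hη1 : ∀ lam > (0 : ℝ), ∀ t ∈ Icc (0 : ℝ) 1, ‖η lam t‖ = 1)
    (hη0 : ∀ lam > (0 : ℝ), η lam 0 = θ 0)
    (hρ0 : ∀ lam > (0 : ℝ), ρ lam 0 = 0)
    (hρpos : ∀ lam > (0 : ℝ), ∀ t ∈ Ioc (0 : ℝ) 1, 0 < ρ lam t)
    (hODE : ∀ lam > (0 : ℝ), ∀ t ∈ Ioc (0 : ℝ) 1,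
      HasDerivAt (η lam)
        ((lam * (Real.cosh (ρ lam t) / Real.sinh (ρ lam t))) •
          (θ t - (inner ℝ (θ t) (η lam t) : ℝ) • η lam t)) t ∧
      HasDerivAt (ρ lam) (lam * (inner ℝ (θ t) (η lam t) : ℝ)) t) :
    ∃ C > (0 : ℝ), ∃ Λ > (0 : ℝ), ∀ lam ≥ Λ, ∀ t ∈ Icc (0 : ℝ) 1,
      |(inner ℝ (θ t) (η lam t - θ t) : ℝ)| ≤ C / lam ^ 2 := by
  -- continuity of θ
  have hθc : ContinuousOn θ (Icc 0 1) := fun t ht =>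
    (hθd t ht).continuousAt.continuousWithinAt
  -- ⟨θ,θ⟩ = 1
  have hθθ : ∀ t ∈ Icc (0 : ℝ) 1, (inner ℝ (θ t) (θ t) : ℝ) = 1 := by
    intro t ht
    rw [real_inner_self_eq_norm_sq, hθ1 t ht]; norm_num
  -- ⟨θ', θ⟩ = 0
  have hperp : ∀ t ∈ Icc (0 : ℝ) 1, (inner ℝ (θ' t) (θ t) : ℝ) = 0 := by
    intro t ht
    have hu : UniqueDiffWithinAt ℝ (Icc (0:ℝ) 1) t := uniqueDiffOn_Icc one_pos t ht
    have h1 : HasDerivWithinAt (fun s => (inner ℝ (θ s) (θ s) : ℝ))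
        ((inner ℝ (θ t) (θ' t) : ℝ) + (inner ℝ (θ' t) (θ t) : ℝ)) (Icc 0 1) t :=
      ((hθd t ht).inner (𝕜 := ℝ) (hθd t ht)).hasDerivWithinAt
    have h2 : HasDerivWithinAt (fun s => (inner ℝ (θ s) (θ s) : ℝ)) 0 (Icc 0 1) t :=
      (hasDerivWithinAt_const t (Icc (0:ℝ) 1) (1:ℝ)).congr
        (fun s hs => hθθ s hs) (hθθ t ht)
    have := (h1.derivWithin hu).symm.trans (h2.derivWithin hu)
    have hsymm : (inner ℝ (θ t) (θ' t) : ℝ) = (inner ℝ (θ' t) (θ t) : ℝ) := real_inner_comm _ _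
    linarith [this, hsymm]
  -- bound on θ'
  obtain ⟨K, hK⟩ := isCompact_Icc.exists_bound_of_continuousOn hθ'c
  set M : ℝ := max K 1 with hMdef
  have hM1 : (1:ℝ) ≤ M := le_max_right _ _
  have hMpos : (0:ℝ) < M := lt_of_lt_of_le one_pos hM1
  have hKM : ∀ t ∈ Icc (0:ℝ) 1, ‖θ' t‖ ≤ M := fun t ht => (hK t ht).trans (le_max_left _ _)
  refine ⟨8 * M ^ 2, by positivity, 4 * M, by positivity, ?_⟩
  intro lam hlam t ht
  have hlam0 : (0:ℝ) < lam := lt_of_lt_of_le (by positivity) hlam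
  set B : ℝ := 8 * M ^ 2 / lam ^ 2 with hBdef
  have hBpos : 0 < B := by positivity
  have hBhalf : B ≤ 1 / 2 := by
    rw [hBdef, div_le_div_iff₀ (by positivity) (by norm_num)]
    nlinarith [sq_nonneg lam, sq_nonneg M]
  set F : ℝ → ℝ := fun s => 1 - (inner ℝ (θ s) (η lam s) : ℝ) with hFdef
  have hFc : ContinuousOn F (Icc 0 1) :=
    continuousOn_const.sub (hθc.inner (hηc lam hlam0))
  have hF0 : F 0 = 0 := by
    simp only [hFdef, hη0 lam hlam0, hθθ 0 (by norm_num : (0:ℝ) ∈ Icc (0:ℝ) 1)]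
    ring
  have hFnonneg : ∀ s ∈ Icc (0:ℝ) 1, 0 ≤ F s := by
    intro s hs
    have := real_inner_le_norm (θ s) (η lam s)
    rw [hθ1 s hs, hη1 lam hlam0 s hs] at this
    simp only [hFdef]; linarith
  -- key barrier claim
  have hlt : ∀ s ∈ Icc (0:ℝ) 1, F s < B := by
    by_contra hcon
    push_neg at hcon
    obtain ⟨s₀, hs₀, hBs₀⟩ := hcon
    set S : Set ℝ := {s | s ∈ Icc (0:ℝ) 1 ∧ B ≤ F s} with hSdef
    have hSne : S.Nonempty := ⟨s₀, hs₀, hBs₀⟩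
    have hSbdd : BddBelow S := ⟨0, fun x hx => hx.1.1⟩
    have hSclosed : IsClosed S := by
      have : S = Icc (0:ℝ) 1 ∩ F ⁻¹' Ici B := by
        ext x; simp [hSdef, Set.mem_Ici, and_comm]
      rw [this]
      exact hFc.preimage_isClosed_of_isClosed isClosed_Icc isClosed_Ici
    set t₀ : ℝ := sInf S with ht₀def
    have ht₀S : t₀ ∈ S := hSclosed.csInf_mem hSne hSbdd
    have ht₀Icc : t₀ ∈ Icc (0:ℝ) 1 := ht₀S.1
    have ht₀pos : 0 < t₀ := by
      rcases lt_or_eq_of_le ht₀Icc.1 with h | h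
      · exact h
      · exfalso
        have : B ≤ F t₀ := ht₀S.2
        rw [← h, hF0] at this
        linarith
    have hless : ∀ s ∈ Ioo (0:ℝ) t₀, F s < B := by
      intro s hs
      by_contra hns
      push_neg at hns
      have hsS : s ∈ S := ⟨⟨hs.1.le, hs.2.le.trans ht₀Icc.2⟩, hns⟩
      exact absurd (csInf_le hSbdd hsS) (not_le.mpr hs.2)
    have hsub : Ioo (0:ℝ) t₀ ⊆ Icc (0:ℝ) 1 := fun s hs =>
      ⟨hs.1.le, hs.2.le.trans ht₀Icc.2⟩
    have hNeBot : (𝓝[Ioo (0:ℝ) t₀] t₀).NeBot := by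
      refine mem_closure_iff_nhdsWithin_neBot.mp ?_
      rw [closure_Ioo ht₀pos.ne]
      exact Set.right_mem_Icc.mpr ht₀pos.le
    -- F t₀ = B
    have hFt₀le : F t₀ ≤ B := by
      have htend : Tendsto F (𝓝[Ioo (0:ℝ) t₀] t₀) (𝓝 (F t₀)) :=
        (hFc t₀ ht₀Icc).mono_left (nhdsWithin_mono _ hsub)
      exact le_of_tendsto htend (eventually_mem_nhdsWithin.mono fun s hs => (hless s hs).le)
    have hFt₀ : F t₀ = B := le_antisymm hFt₀le ht₀S.2
    -- derivative of F at t₀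
    have ht₀Ioc : t₀ ∈ Ioc (0:ℝ) 1 := ⟨ht₀pos, ht₀Icc.2⟩
    obtain ⟨hηd, -⟩ := hODE lam hlam0 t₀ ht₀Ioc
    set g : ℝ := (inner ℝ (θ t₀) (η lam t₀) : ℝ) with hgdef
    set c : ℝ := lam * (Real.cosh (ρ lam t₀) / Real.sinh (ρ lam t₀)) with hcdef
    have hFd : HasDerivAt F
        (-(((inner ℝ (θ t₀) ((c • (θ t₀ - g • η lam t₀)) : EuclideanSpace ℝ (Fin d)) : ℝ))
          + (inner ℝ (θ' t₀) (η lam t₀) : ℝ))) t₀ := by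
      have := ((hθd t₀ ht₀Icc).inner (𝕜 := ℝ) hηd).const_sub (1:ℝ)
      exact this
    -- simplify the inner product term
    have hinner : (inner ℝ (θ t₀) ((c • (θ t₀ - g • η lam t₀)) : EuclideanSpace ℝ (Fin d)) : ℝ)
        = c * (1 - g ^ 2) := by
      rw [real_inner_smul_right, inner_sub_right, real_inner_smul_right,
        hθθ t₀ ht₀Icc, ← hgdef]
      ring
    -- derivative is nonnegative (left max)
    have hD0 : 0 ≤ -(((inner ℝ (θ t₀) ((c • (θ t₀ - g • η lam t₀)) : EuclideanSpace ℝ (Fin d)) : ℝ))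
          + (inner ℝ (θ' t₀) (η lam t₀) : ℝ)) := by
      have hslope : Tendsto (slope F t₀) (𝓝[Ioo (0:ℝ) t₀] t₀)
          (𝓝 (-(((inner ℝ (θ t₀) ((c • (θ t₀ - g • η lam t₀)) : EuclideanSpace ℝ (Fin d)) : ℝ))
            + (inner ℝ (θ' t₀) (η lam t₀) : ℝ)))) := by
        refine (hasDerivAt_iff_tendsto_slope.mp hFd).mono_left (nhdsWithin_mono _ ?_)
        intro s hs
        simp only [Set.mem_compl_iff, Set.mem_singleton_iff]
        exact ne_of_lt hs.2
      refine ge_of_tendsto hslope (eventually_mem_nhdsWithin.mono fun s hs => ?_)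
      rw [slope_comm]
      rw [slope_def_field]
      apply div_nonneg
      · rw [hFt₀]; linarith [hless s hs]
      · linarith [hs.2]
    -- bounds at t₀
    have hg_eq : g = 1 - B := by
      have : F t₀ = 1 - g := by simp [hFdef, hgdef]
      rw [this] at hFt₀; linarith
    have hcoth : 1 ≤ Real.cosh (ρ lam t₀) / Real.sinh (ρ lam t₀) := by
      have hρ : 0 < ρ lam t₀ := hρpos lam hlam0 t₀ ht₀Ioc
      have hs : 0 < Real.sinh (ρ lam t₀) := Real.sinh_pos_iff.mpr hρ
      rw [le_div_iff₀ hs, one_mul]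
      nlinarith [Real.cosh_sub_sinh (ρ lam t₀), Real.exp_pos (-(ρ lam t₀))]
    have hclam : lam ≤ c := by
      rw [hcdef]
      exact le_mul_of_one_le_right hlam0.le hcoth
    -- ‖η − θ‖² = 2B
    have hnorm : ‖η lam t₀ - θ t₀‖ ^ 2 = 2 * B := by
      rw [norm_sub_sq_real, hη1 lam hlam0 t₀ ht₀Icc, hθ1 t₀ ht₀Icc,
        real_inner_comm, ← hgdef, hg_eq]
      ring
    have hnormval : ‖η lam t₀ - θ t₀‖ ≤ 4 * M / lam := by
      have h1 : (4 * M / lam) ^ 2 = 2 * B := by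
        rw [hBdef]; field_simp; ring
      nlinarith [norm_nonneg (η lam t₀ - θ t₀), (by positivity : (0:ℝ) < 4 * M / lam)]
    have hθ'η : |(inner ℝ (θ' t₀) (η lam t₀) : ℝ)| ≤ 4 * M ^ 2 / lam := by
      have heq : (inner ℝ (θ' t₀) (η lam t₀) : ℝ)
          = (inner ℝ (θ' t₀) (η lam t₀ - θ t₀) : ℝ) := by
        rw [inner_sub_right, hperp t₀ ht₀Icc]; ring
      rw [heq]
      calc |(inner ℝ (θ' t₀) (η lam t₀ - θ t₀) : ℝ)|
          ≤ ‖θ' t₀‖ * ‖η lam t₀ - θ t₀‖ := abs_real_inner_le_norm _ _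
        _ ≤ M * (4 * M / lam) := by
            apply mul_le_mul (hKM t₀ ht₀Icc) hnormval (norm_nonneg _) hMpos.le
        _ = 4 * M ^ 2 / lam := by ring
    -- the derivative is strictly negative: contradiction
    have h1g2 : 1 - g ^ 2 = B * (2 - B) := by rw [hg_eq]; ring
    have hc1g2 : lam * (B * (3/2)) ≤ c * (1 - g ^ 2) := by
      rw [h1g2]
      have h2B : B * (3/2) ≤ B * (2 - B) :=
        mul_le_mul_of_nonneg_left (by linarith) hBpos.le
      calc lam * (B * (3/2)) ≤ c * (B * (3/2)) :=
            mul_le_mul_of_nonneg_right hclam (mul_nonneg hBpos.le (by norm_num))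
        _ ≤ c * (B * (2 - B)) :=
            mul_le_mul_of_nonneg_left h2B (le_trans hlam0.le hclam)
    have hBval : lam * (B * (3/2)) = 12 * M ^ 2 / lam := by
      rw [hBdef]; field_simp; ring
    rw [hinner] at hD0
    have habs := abs_le.mp hθ'η
    have hfinal : -(c * (1 - g ^ 2) + (inner ℝ (θ' t₀) (η lam t₀) : ℝ)) < 0 := by
      have h12 : 12 * M ^ 2 / lam ≤ c * (1 - g ^ 2) := hBval ▸ hc1g2
      have h128 : 12 * M ^ 2 / lam - 4 * M ^ 2 / lam = 8 * M ^ 2 / lam := by ring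
      have hpos8 : 0 < 8 * M ^ 2 / lam := by positivity
      linarith [habs.1, habs.2]
    linarith
  -- conclude
  have hval : (inner ℝ (θ t) (η lam t - θ t) : ℝ) = -(F t) := by
    rw [inner_sub_right, hθθ t ht]
    simp only [hFdef]
    ring
  rw [hval, abs_neg, abs_of_nonneg (hFnonneg t ht)]
  exact (hlt t ht).le
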